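/- Let E and F be Banach spaces, n a positive integer, 1 ≤ p < ∞, and let P : E → F be a continuous n-homogeneous polynomial. Suppose there exist a regular Borel probability measure μ on B_{E*} with the weak* topology and a continuous n-homogeneous polynomial Q : G_{E,p} → F, where G_{E,p} is the closure in L_p(μ) of the subspace { e_x : x ∈ E }, such that P(x) = Q(e_x) for every x ∈ E. Then P is p-dominated and ‖P‖_{d,p} ≤ ‖Q‖. -/

import Mathlib

open MeasureTheory Finset
open scoped Classical

noncomputable section

/-- The closed unit ball of the dual of `E`, equipped with the weak* topology. -/
abbrev DualBall (𝕜 E : Type) [RCLike 𝕜] [NormedAddCommGroup E] [NormedSpace 𝕜 E] : Type :=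
  {φ : WeakDual 𝕜 E // ‖WeakDual.toStrongDual φ‖ ≤ 1}

variable (𝕜 : Type) [RCLike 𝕜] {E F G : Type} [NormedAddCommGroup E] [NormedSpace 𝕜 E]
  [NormedAddCommGroup F] [NormedSpace 𝕜 F] [NormedAddCommGroup G] [NormedSpace 𝕜 G]

instance : MeasurableSpace (DualBall 𝕜 E) := borel _
instance : BorelSpace (DualBall 𝕜 E) := ⟨rfl⟩

/-- `P : E → F` is a continuous `n`-homogeneous polynomial: `P x = M (x, …, x)` for some
continuous `n`-linear map `M`. -/
def IsHomogPoly (n : ℕ) (P : E → F) : Prop :=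
  ∃ M : ContinuousMultilinearMap 𝕜 (fun _ : Fin n => E) F, ∀ x, P x = M (fun _ => x)

/-- The `p`-domination inequality for the `n`-homogeneous map `P` with constant `C`. -/
def DomIneq (p : ℝ) (n : ℕ) (P : E → F) (C : ℝ) : Prop :=
  ∀ (m : ℕ) (x : Fin m → E),
    (∑ j, ‖P (x j)‖ ^ (p / (n : ℝ))) ^ ((n : ℝ) / p) ≤
      C * ⨆ φ : DualBall 𝕜 E, (∑ j, ‖φ.1 (x j)‖ ^ p) ^ ((n : ℝ) / p)

/-- The `p`-dominated norm `‖P‖_{d,p}`: the infimum of the constants in the domination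
inequality. -/
def domNorm (p : ℝ) (n : ℕ) (P : E → F) : ℝ :=
  sInf {C : ℝ | 0 < C ∧ DomIneq 𝕜 p n P C}

/-- The element `(e_x)^n` of `L_{p/n}(μ)`, i.e. the class of the continuous function
`x* ↦ ⟨x*, x⟩ ^ n` on the dual ball. -/
def evalPowLp (p : ℝ) (n : ℕ) (μ : Measure (DualBall 𝕜 E)) (x : E) :
    Lp 𝕜 (ENNReal.ofReal (p / (n : ℝ))) μ :=
  if h : MemLp (fun φ : DualBall 𝕜 E => (φ.1 x) ^ n) (ENNReal.ofReal (p / (n : ℝ))) μ then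
    h.toLp _
  else 0

/-- The subspace `E^{p/n}` of `L_{p/n}(μ)` spanned by the functions `(e_x)^n`, `x ∈ E`. -/
def Epn (p : ℝ) (n : ℕ) (μ : Measure (DualBall 𝕜 E)) :
    Submodule 𝕜 (Lp 𝕜 (ENNReal.ofReal (p / (n : ℝ))) μ) :=
  Submodule.span 𝕜 (Set.range (evalPowLp 𝕜 p n μ))

/-- The norm `π_{p/n}` on `E^{p/n}`. -/
def piNorm (p : ℝ) (n : ℕ) (μ : Measure (DualBall 𝕜 E))
    (g : Lp 𝕜 (ENNReal.ofReal (p / (n : ℝ))) μ) : ℝ :=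
  sInf {t : ℝ | ∃ (m : ℕ) (c : Fin m → 𝕜) (x : Fin m → E),
    g = ∑ i, c i • evalPowLp 𝕜 p n μ (x i) ∧
    t = ∑ i, ‖c i‖ * ‖evalPowLp 𝕜 p n μ (x i)‖}

/-- The element `e_x` of `L_p(μ)`, i.e. the class of the continuous function
`x* ↦ ⟨x*, x⟩` on the dual ball. -/
def evalLp (p : ℝ) (μ : Measure (DualBall 𝕜 E)) (x : E) : Lp 𝕜 (ENNReal.ofReal p) μ :=
  if h : MemLp (fun φ : DualBall 𝕜 E => φ.1 x) (ENNReal.ofReal p) μ then h.toLp _ else 0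

/-- The absolutely `p`-summing inequality for `S` with constant `C`. -/
def SummingIneq (p : ℝ) (S : E → G) (C : ℝ) : Prop :=
  ∀ (m : ℕ) (x : Fin m → E),
    (∑ j, ‖S (x j)‖ ^ p) ^ (1 / p) ≤
      C * ⨆ φ : DualBall 𝕜 E, (∑ j, ‖φ.1 (x j)‖ ^ p) ^ (1 / p)

/-- The `p`-summing norm `π_p(S)`. -/
def summingNorm (p : ℝ) (S : E → G) : ℝ :=
  sInf {C : ℝ | 0 < C ∧ SummingIneq 𝕜 p S C}

/-- The sup norm of a map on the closed unit ball. -/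
def supNorm (Q : G → F) : ℝ := ⨆ y : {y : G // ‖y‖ ≤ 1}, ‖Q y.1‖

/-- `G_{E,p}`: the closure in `L_p(μ)` of the subspace of all `e_x`, `x ∈ E`. -/
def GEp (p : ℝ) (μ : Measure (DualBall 𝕜 E)) [Fact (1 ≤ ENNReal.ofReal p)] :
    Submodule 𝕜 (Lp 𝕜 (ENNReal.ofReal p) μ) :=
  (Submodule.span 𝕜 (Set.range (evalLp 𝕜 p μ))).topologicalClosure

open scoped ENNReal NNReal
set_option linter.unusedSectionVars false
section Aux

lemma homog_bdd {n : ℕ} {Q : G → F}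
    (M : ContinuousMultilinearMap 𝕜 (fun _ : Fin n => G) F) (hM : ∀ y, Q y = M (fun _ => y)) :
    BddAbove (Set.range fun y : {y : G // ‖y‖ ≤ 1} => ‖Q y.1‖) := by
  refine ⟨‖M‖, ?_⟩
  rintro _ ⟨y, rfl⟩
  simp only []
  rw [hM]
  calc ‖M (fun _ => y.1)‖ ≤ ‖M‖ * ∏ _i : Fin n, ‖y.1‖ := M.le_opNorm _
    _ ≤ ‖M‖ * 1 := by
        exact mul_le_mul_of_nonneg_left
          (Finset.prod_le_one (fun _ _ => norm_nonneg _) (fun _ _ => y.2)) M.opNorm_nonneg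
    _ = ‖M‖ := mul_one _

lemma supNorm_nonneg {n : ℕ} {Q : G → F}
    (M : ContinuousMultilinearMap 𝕜 (fun _ : Fin n => G) F) (hM : ∀ y, Q y = M (fun _ => y)) :
    0 ≤ supNorm Q :=
  le_trans (norm_nonneg _) (le_ciSup (homog_bdd 𝕜 M hM) ⟨0, by simp⟩)

lemma norm_le_supNorm {n : ℕ} (hn : 0 < n) {Q : G → F}
    (M : ContinuousMultilinearMap 𝕜 (fun _ : Fin n => G) F) (hM : ∀ y, Q y = M (fun _ => y))
    (y : G) : ‖Q y‖ ≤ supNorm Q * ‖y‖ ^ n := by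
  rcases eq_or_ne y 0 with rfl | hy
  · have : Q 0 = 0 := by
      rw [hM]
      have := M.map_coord_zero (⟨0, hn⟩ : Fin n) (m := fun _ => (0:G)) rfl
      simpa using this
    simp [this, zero_pow hn.ne']
  · set c : ℝ := ‖y‖ with hc
    have hc0 : 0 < c := norm_pos_iff.mpr hy
    set z : G := ((c : 𝕜))⁻¹ • y with hz
    have hcz : ((c : 𝕜)) • z = y := by
      rw [hz, smul_inv_smul₀]
      simpa using hc0.ne'
    have hznorm : ‖z‖ = 1 := by
      rw [hz, norm_smul, norm_inv]
      simp only [RCLike.norm_ofReal, abs_of_pos hc0]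
      field_simp
      exact hc.symm
    have hzle : ‖Q z‖ ≤ supNorm Q := le_ciSup (homog_bdd 𝕜 M hM) ⟨z, hznorm.le⟩
    have hQ : Q y = ((c:𝕜)) ^ n • Q z := by
      rw [← hcz, hM, hM]
      have := M.map_smul_univ (fun _ => (c:𝕜)) (fun _ => z)
      rw [this]; simp
    rw [hQ, norm_smul, norm_pow]
    simp only [RCLike.norm_ofReal, abs_of_pos hc0]
    calc c ^ n * ‖Q z‖ ≤ c ^ n * supNorm Q := by
          exact mul_le_mul_of_nonneg_left hzle (pow_nonneg hc0.le n)
      _ = supNorm Q * ‖y‖ ^ n := by rw [mul_comm, hc]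

lemma eval_continuous' (x : E) : Continuous fun φ : DualBall 𝕜 E => φ.1 x :=
  (WeakDual.eval_continuous x).comp continuous_subtype_val

lemma eval_bound (x : E) (φ : DualBall 𝕜 E) : ‖φ.1 x‖ ≤ ‖x‖ := by
  calc ‖φ.1 x‖ = ‖WeakDual.toStrongDual φ.1 x‖ := rfl
    _ ≤ ‖WeakDual.toStrongDual φ.1‖ * ‖x‖ := (WeakDual.toStrongDual φ.1).le_opNorm x
    _ ≤ 1 * ‖x‖ := by gcongr; exact φ.2
    _ = ‖x‖ := one_mul _

variable {p : ℝ} (hp : 1 ≤ p) {μ : Measure (DualBall 𝕜 E)} [IsProbabilityMeasure μ]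

include hp

lemma memLp_eval (x : E) : MemLp (fun φ : DualBall 𝕜 E => φ.1 x) (ENNReal.ofReal p) μ :=
  MemLp.of_bound (eval_continuous' 𝕜 x).aestronglyMeasurable ‖x‖
    (Filter.Eventually.of_forall fun φ => eval_bound 𝕜 x φ)

lemma evalLp_eq (x : E) : evalLp 𝕜 p μ x = (memLp_eval 𝕜 hp x).toLp _ :=
  dif_pos _

lemma norm_evalLp_pow (x : E) :
    ‖evalLp 𝕜 p μ x‖ ^ p = (∫⁻ φ, (‖φ.1 x‖₊ : ℝ≥0∞) ^ p ∂μ).toReal := by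
  have hp0 : (0:ℝ) < p := lt_of_lt_of_le one_pos hp
  rw [evalLp_eq 𝕜 hp x, Lp.norm_toLp,
    eLpNorm_eq_lintegral_rpow_enorm_toReal (by simp [hp0]) ENNReal.ofReal_ne_top,
    ENNReal.toReal_ofReal hp0.le]
  rw [ENNReal.toReal_rpow, ← ENNReal.rpow_mul, one_div_mul_cancel hp0.ne', ENNReal.rpow_one]
  simp only [enorm_eq_nnnorm]

lemma sum_norm_evalLp_le (m : ℕ) (x : Fin m → E) :
    ∑ j, ‖evalLp 𝕜 p μ (x j)‖ ^ p ≤ ⨆ φ : DualBall 𝕜 E, ∑ j, ‖φ.1 (x j)‖ ^ p := by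
  have hp0 : (0:ℝ) < p := lt_of_lt_of_le one_pos hp
  set g : DualBall 𝕜 E → ℝ := fun φ => ∑ j, ‖φ.1 (x j)‖ ^ p with hg
  have hbdd : BddAbove (Set.range g) := by
    refine ⟨∑ j, ‖x j‖ ^ p, ?_⟩
    rintro _ ⟨φ, rfl⟩
    exact Finset.sum_le_sum fun j _ =>
      Real.rpow_le_rpow (norm_nonneg _) (eval_bound 𝕜 (x j) φ) hp0.le
  set S : ℝ := ⨆ φ : DualBall 𝕜 E, g φ with hSdef
  have hS : ∀ φ, g φ ≤ S := fun φ => le_ciSup hbdd φ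
  have hφ0 : (⟨0, by simp⟩ : DualBall 𝕜 E) = (⟨0, by simp⟩ : DualBall 𝕜 E) := rfl
  have hS0 : 0 ≤ S := by
    refine le_trans ?_ (hS ⟨0, by simp⟩)
    exact Finset.sum_nonneg fun j _ => Real.rpow_nonneg (norm_nonneg _) _
  have hpt : ∀ (y : E) (φ : DualBall 𝕜 E),
      (‖φ.1 y‖₊ : ℝ≥0∞) ^ p = ENNReal.ofReal (‖φ.1 y‖ ^ p) := by
    intro y φ
    rw [← enorm_eq_nnnorm, ← ENNReal.ofReal_rpow_of_nonneg (norm_nonneg _) hp0.le, ofReal_norm]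
  have hmeas : ∀ j, Measurable fun φ : DualBall 𝕜 E => (‖φ.1 (x j)‖₊ : ℝ≥0∞) ^ p := by
    intro j
    exact ENNReal.continuous_rpow_const.measurable.comp
      ((eval_continuous' 𝕜 (x j)).measurable.nnnorm.coe_nnreal_ennreal)
  have hIfin : ∀ j, (∫⁻ φ, (‖φ.1 (x j)‖₊ : ℝ≥0∞) ^ p ∂μ) ≠ ⊤ := by
    intro j
    have : (∫⁻ φ, (‖φ.1 (x j)‖₊ : ℝ≥0∞) ^ p ∂μ) ≤ ENNReal.ofReal (‖x j‖ ^ p) := by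
      calc (∫⁻ φ, (‖φ.1 (x j)‖₊ : ℝ≥0∞) ^ p ∂μ)
          ≤ ∫⁻ _, ENNReal.ofReal (‖x j‖ ^ p) ∂μ := by
            refine lintegral_mono fun φ => ?_
            rw [hpt]
            exact ENNReal.ofReal_le_ofReal
              (Real.rpow_le_rpow (norm_nonneg _) (eval_bound 𝕜 (x j) φ) hp0.le)
        _ = ENNReal.ofReal (‖x j‖ ^ p) := by simp [lintegral_const]
    exact ne_top_of_le_ne_top ENNReal.ofReal_ne_top this
  calc ∑ j, ‖evalLp 𝕜 p μ (x j)‖ ^ p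
      = ∑ j, (∫⁻ φ, (‖φ.1 (x j)‖₊ : ℝ≥0∞) ^ p ∂μ).toReal := by
        exact Finset.sum_congr rfl fun j _ => norm_evalLp_pow 𝕜 hp (x j)
    _ = (∑ j, ∫⁻ φ, (‖φ.1 (x j)‖₊ : ℝ≥0∞) ^ p ∂μ).toReal :=
        (ENNReal.toReal_sum fun j _ => hIfin j).symm
    _ = (∫⁻ φ, ∑ j, (‖φ.1 (x j)‖₊ : ℝ≥0∞) ^ p ∂μ).toReal := by
        rw [lintegral_finset_sum _ fun j _ => hmeas j]
    _ ≤ (ENNReal.ofReal S).toReal := by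
        refine ENNReal.toReal_mono ENNReal.ofReal_ne_top ?_
        calc (∫⁻ φ, ∑ j, (‖φ.1 (x j)‖₊ : ℝ≥0∞) ^ p ∂μ)
            ≤ ∫⁻ _, ENNReal.ofReal S ∂μ := by
              refine lintegral_mono fun φ => ?_
              have : ∑ j, (‖φ.1 (x j)‖₊ : ℝ≥0∞) ^ p = ENNReal.ofReal (g φ) := by
                rw [hg, ENNReal.ofReal_sum_of_nonneg
                  fun j _ => Real.rpow_nonneg (norm_nonneg _) _]
                exact Finset.sum_congr rfl fun j _ => hpt (x j) φ
              rw [this]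
              exact ENNReal.ofReal_le_ofReal (hS φ)
          _ = ENNReal.ofReal S := by simp [lintegral_const]
    _ = S := ENNReal.toReal_ofReal hS0

end Aux

/-- Converse: if `P = Q ∘ e` for a continuous `n`-homogeneous polynomial `Q` on `G_{E,p}`,
then `P` is `p`-dominated and `‖P‖_{d,p} ≤ ‖Q‖`. -/
theorem statement8 [CompleteSpace E] [CompleteSpace F]
    (n : ℕ) (hn : 0 < n) (p : ℝ) (hp : 1 ≤ p) (P : E → F) (hP : IsHomogPoly 𝕜 n P) :
    haveI : Fact (1 ≤ ENNReal.ofReal p) := ⟨ENNReal.one_le_ofReal.mpr hp⟩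
    ∀ (μ : Measure (DualBall 𝕜 E)), IsProbabilityMeasure μ → μ.Regular →
      ∀ Q : ↥(GEp 𝕜 p μ) → F, IsHomogPoly 𝕜 n Q →
        (∀ x : E, P x = Q ⟨evalLp 𝕜 p μ x,
          Submodule.le_topologicalClosure _ (Submodule.subset_span (Set.mem_range_self x))⟩) →
        (∃ C > 0, DomIneq 𝕜 p n P C) ∧ domNorm 𝕜 p n P ≤ supNorm Q := by
  haveI : Fact (1 ≤ ENNReal.ofReal p) := ⟨ENNReal.one_le_ofReal.mpr hp⟩
  intro μ hμprob hμreg Q hQ hPQ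
  haveI := hμprob
  haveI : Nonempty (DualBall 𝕜 E) := ⟨⟨0, by simp⟩⟩
  have hp0 : (0:ℝ) < p := lt_of_lt_of_le one_pos hp
  have hn0 : (0:ℝ) < (n:ℝ) := Nat.cast_pos.mpr hn
  have hpn : (0:ℝ) < p / (n:ℝ) := div_pos hp0 hn0
  have hnp : (0:ℝ) < (n:ℝ) / p := div_pos hn0 hp0
  obtain ⟨M, hM⟩ := hQ
  have hQnn : 0 ≤ supNorm Q := supNorm_nonneg 𝕜 M hM
  -- the supremum appearing in DomIneq is nonneg
  have hTbdd : ∀ (m : ℕ) (x : Fin m → E),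
      BddAbove (Set.range fun φ : DualBall 𝕜 E =>
        (∑ j, ‖φ.1 (x j)‖ ^ p) ^ ((n:ℝ)/p)) := by
    intro m x
    refine ⟨(∑ j, ‖x j‖ ^ p) ^ ((n:ℝ)/p), ?_⟩
    rintro _ ⟨φ, rfl⟩
    refine Real.rpow_le_rpow (Finset.sum_nonneg fun j _ =>
      Real.rpow_nonneg (norm_nonneg _) _) ?_ hnp.le
    exact Finset.sum_le_sum fun j _ =>
      Real.rpow_le_rpow (norm_nonneg _) (eval_bound 𝕜 (x j) φ) hp0.le
  have hT0 : ∀ (m : ℕ) (x : Fin m → E),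
      0 ≤ ⨆ φ : DualBall 𝕜 E, (∑ j, ‖φ.1 (x j)‖ ^ p) ^ ((n:ℝ)/p) := by
    intro m x
    refine le_trans (Real.rpow_nonneg (Finset.sum_nonneg fun j _ =>
      Real.rpow_nonneg (norm_nonneg _) _) _) (le_ciSup (hTbdd m x) ⟨0, by simp⟩)
  -- the main estimate
  have key : DomIneq 𝕜 p n P (supNorm Q) := by
    intro m x
    set e : E → ↥(GEp 𝕜 p μ) := fun y => ⟨evalLp 𝕜 p μ y,
      Submodule.le_topologicalClosure _ (Submodule.subset_span (Set.mem_range_self y))⟩ with he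
    have henorm : ∀ y : E, ‖e y‖ = ‖evalLp 𝕜 p μ y‖ := fun y => rfl
    set S : ℝ := ⨆ φ : DualBall 𝕜 E, ∑ j, ‖φ.1 (x j)‖ ^ p with hSdef
    set T : ℝ := ⨆ φ : DualBall 𝕜 E, (∑ j, ‖φ.1 (x j)‖ ^ p) ^ ((n:ℝ)/p) with hTdef
    have hT0' : 0 ≤ T := hT0 m x
    -- S ^ (n/p) ≤ T
    have hST : S ^ ((n:ℝ)/p) ≤ T := by
      have hS_le : S ≤ T ^ (p/(n:ℝ)) := by
        refine ciSup_le fun φ => ?_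
        have h1 : (∑ j, ‖φ.1 (x j)‖ ^ p) ^ ((n:ℝ)/p) ≤ T := le_ciSup (hTbdd m x) φ
        have h2 : (((∑ j, ‖φ.1 (x j)‖ ^ p) ^ ((n:ℝ)/p)) ^ (p/(n:ℝ))) ≤ T ^ (p/(n:ℝ)) :=
          Real.rpow_le_rpow (Real.rpow_nonneg (Finset.sum_nonneg fun j _ =>
            Real.rpow_nonneg (norm_nonneg _) _) _) h1 hpn.le
        rwa [← Real.rpow_mul (Finset.sum_nonneg fun j _ =>
          Real.rpow_nonneg (norm_nonneg _) _),
          div_mul_div_comm, mul_comm, div_self (by positivity), Real.rpow_one] at h2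
      calc S ^ ((n:ℝ)/p) ≤ (T ^ (p/(n:ℝ))) ^ ((n:ℝ)/p) := by
            refine Real.rpow_le_rpow ?_ hS_le hnp.le
            refine le_ciSup_of_le ?_ (⟨0, by simp⟩ : DualBall 𝕜 E) ?_
            · refine ⟨∑ j, ‖x j‖ ^ p, ?_⟩
              rintro _ ⟨φ, rfl⟩
              exact Finset.sum_le_sum fun j _ =>
                Real.rpow_le_rpow (norm_nonneg _) (eval_bound 𝕜 (x j) φ) hp0.le
            · exact Finset.sum_nonneg fun j _ => Real.rpow_nonneg (norm_nonneg _) _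
        _ = T := by
            rw [← Real.rpow_mul hT0', div_mul_div_comm, mul_comm, div_self (by positivity),
              Real.rpow_one]
    -- pointwise bound for each j
    have hterm : ∀ j, ‖P (x j)‖ ^ (p/(n:ℝ)) ≤ supNorm Q ^ (p/(n:ℝ)) * ‖e (x j)‖ ^ p := by
      intro j
      have h1 : ‖P (x j)‖ ≤ supNorm Q * ‖e (x j)‖ ^ n := by
        rw [hPQ (x j)]
        exact norm_le_supNorm 𝕜 hn M hM _
      calc ‖P (x j)‖ ^ (p/(n:ℝ)) ≤ (supNorm Q * ‖e (x j)‖ ^ n) ^ (p/(n:ℝ)) :=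
            Real.rpow_le_rpow (norm_nonneg _) h1 hpn.le
        _ = supNorm Q ^ (p/(n:ℝ)) * (‖e (x j)‖ ^ n) ^ (p/(n:ℝ)) :=
            Real.mul_rpow hQnn (pow_nonneg (norm_nonneg _) n)
        _ = supNorm Q ^ (p/(n:ℝ)) * ‖e (x j)‖ ^ p := by
            rw [← Real.rpow_natCast ‖e (x j)‖ n, ← Real.rpow_mul (norm_nonneg _),
              mul_div_cancel₀ p hn0.ne']
    have hsum : ∑ j, ‖P (x j)‖ ^ (p/(n:ℝ)) ≤ supNorm Q ^ (p/(n:ℝ)) * S := by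
      calc ∑ j, ‖P (x j)‖ ^ (p/(n:ℝ))
          ≤ ∑ j, supNorm Q ^ (p/(n:ℝ)) * ‖e (x j)‖ ^ p :=
            Finset.sum_le_sum fun j _ => hterm j
        _ = supNorm Q ^ (p/(n:ℝ)) * ∑ j, ‖evalLp 𝕜 p μ (x j)‖ ^ p := by
            rw [← Finset.mul_sum]
            rfl
        _ ≤ supNorm Q ^ (p/(n:ℝ)) * S :=
            mul_le_mul_of_nonneg_left (sum_norm_evalLp_le 𝕜 hp m x)
              (Real.rpow_nonneg hQnn _)
    calc (∑ j, ‖P (x j)‖ ^ (p/(n:ℝ))) ^ ((n:ℝ)/p)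
        ≤ (supNorm Q ^ (p/(n:ℝ)) * S) ^ ((n:ℝ)/p) :=
          Real.rpow_le_rpow (Finset.sum_nonneg fun j _ =>
            Real.rpow_nonneg (norm_nonneg _) _) hsum hnp.le
      _ = supNorm Q * S ^ ((n:ℝ)/p) := by
          have hSbdd : BddAbove (Set.range fun φ : DualBall 𝕜 E =>
              ∑ j, ‖φ.1 (x j)‖ ^ p) := by
            refine ⟨∑ j, ‖x j‖ ^ p, ?_⟩
            rintro _ ⟨φ, rfl⟩
            exact Finset.sum_le_sum fun j _ =>
              Real.rpow_le_rpow (norm_nonneg _) (eval_bound 𝕜 (x j) φ) hp0.le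
          have hS0 : 0 ≤ S :=
            le_trans (Finset.sum_nonneg fun j _ =>
              Real.rpow_nonneg (norm_nonneg _) _)
              (le_ciSup hSbdd (⟨0, by simp⟩ : DualBall 𝕜 E))
          rw [Real.mul_rpow (Real.rpow_nonneg hQnn _) hS0, ← Real.rpow_mul hQnn,
            div_mul_div_comm, mul_comm p, div_self (by positivity), Real.rpow_one]
      _ ≤ supNorm Q * T := mul_le_mul_of_nonneg_left hST hQnn
  -- monotonicity of the domination inequality in the constant
  have hmono : ∀ C C', DomIneq 𝕜 p n P C → C ≤ C' → DomIneq 𝕜 p n P C' := by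
    intro C C' h hle m x
    exact le_trans (h m x) (mul_le_mul_of_nonneg_right hle (hT0 m x))
  constructor
  · exact ⟨supNorm Q + 1, by positivity, hmono _ _ key (by linarith)⟩
  · refine le_of_forall_pos_le_add fun ε hε => ?_
    refine csInf_le_of_le ⟨0, fun C hC => hC.1.le⟩
      (Set.mem_setOf.mpr ⟨by positivity, hmono _ _ key (by linarith)⟩) le_rfl
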